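/- Fix real constants σ and n and a sign ε = ±1. Let τ > 0, h > 0, let u, u₊, u₋ > 0 and û ∈ ℝ satisfy the explicit difference scheme (û - u)/τ = (1/h)·[ ((u₊+u)/2)^σ·(u₊-u)/h − ((u+u₋)/2)^σ·(u-u₋)/h ] + ε·uⁿ. Then for every λ > 0 the scaled values τ* = λ^{2(n-1)}τ, h* = λ^{n-σ-1}h, u* = λ⁻²u, u₊* = λ⁻²u₊, u₋* = λ⁻²u₋, û* = λ⁻²û satisfy the same scheme. That is, the explicit scheme is invariant under the scaling subgroup generated by X₃ = 2(n-1)t∂/∂t + (n-σ-1)x∂/∂x − 2u∂/∂u admitted by the PDE u_t = (u^σ u_x)_x ± uⁿ. -/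

import Mathlib

open Real

/-- The explicit difference scheme
`(û − u)/τ = (1/h)[((u₊+u)/2)^σ (u₊−u)/h − ((u+u₋)/2)^σ (u−u₋)/h] ± uⁿ`
for the PDE `u_t = (u^σ u_x)_x ± uⁿ` is invariant under the scaling subgroup
generated by `X₃ = 2(n−1)t∂_t + (n−σ−1)x∂_x − 2u∂_u`:
`τ ↦ λ^{2(n−1)}τ`, `h ↦ λ^{n−σ−1}h`, `u ↦ λ⁻²u`. -/
theorem explicit_scheme_nonlinear_heat_scaling_invariant
    (σ n eps : ℝ) (heps : eps = 1 ∨ eps = -1)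
    (τ h u up um uh : ℝ) (hτ : 0 < τ) (hh : 0 < h)
    (hu : 0 < u) (hup : 0 < up) (hum : 0 < um)
    (hscheme : (uh - u) / τ
      = (1 / h) * (((up + u) / 2) ^ σ * (up - u) / h
          - ((u + um) / 2) ^ σ * (u - um) / h) + eps * u ^ n)
    (lam : ℝ) (hlam : 0 < lam) :
    (lam ^ (-2 : ℝ) * uh - lam ^ (-2 : ℝ) * u) / (lam ^ (2 * (n - 1)) * τ)
      = (1 / (lam ^ (n - σ - 1) * h))
          * (((lam ^ (-2 : ℝ) * up + lam ^ (-2 : ℝ) * u) / 2) ^ σ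
                * (lam ^ (-2 : ℝ) * up - lam ^ (-2 : ℝ) * u) / (lam ^ (n - σ - 1) * h)
              - ((lam ^ (-2 : ℝ) * u + lam ^ (-2 : ℝ) * um) / 2) ^ σ
                * (lam ^ (-2 : ℝ) * u - lam ^ (-2 : ℝ) * um) / (lam ^ (n - σ - 1) * h))
        + eps * (lam ^ (-2 : ℝ) * u) ^ n := by
  have hl : (0:ℝ) ≤ lam := hlam.le
  have hp : ∀ x : ℝ, 0 < lam ^ x := fun x => Real.rpow_pos_of_pos hlam x
  -- rewrite sums/halves as lam^(-2) * (...)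
  have e1 : lam ^ (-2:ℝ) * up + lam ^ (-2:ℝ) * u = lam ^ (-2:ℝ) * (up + u) := by ring
  have e2 : lam ^ (-2:ℝ) * u + lam ^ (-2:ℝ) * um = lam ^ (-2:ℝ) * (u + um) := by ring
  have d1 : lam ^ (-2:ℝ) * (up + u) / 2 = lam ^ (-2:ℝ) * ((up + u) / 2) := by ring
  have d2 : lam ^ (-2:ℝ) * (u + um) / 2 = lam ^ (-2:ℝ) * ((u + um) / 2) := by ring
  have p1 : (lam ^ (-2:ℝ) * ((up + u) / 2)) ^ σ
      = lam ^ ((-2:ℝ) * σ) * ((up + u) / 2) ^ σ := by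
    rw [Real.mul_rpow (hp _).le (by positivity), ← Real.rpow_mul hl]
  have p2 : (lam ^ (-2:ℝ) * ((u + um) / 2)) ^ σ
      = lam ^ ((-2:ℝ) * σ) * ((u + um) / 2) ^ σ := by
    rw [Real.mul_rpow (hp _).le (by positivity), ← Real.rpow_mul hl]
  have p3 : (lam ^ (-2:ℝ) * u) ^ n = lam ^ ((-2:ℝ) * n) * u ^ n := by
    rw [Real.mul_rpow (hp _).le hu.le, ← Real.rpow_mul hl]
  rw [e1, e2, d1, d2, p1, p2, p3]
  have key : ∀ a b : ℝ, lam ^ a * lam ^ b = lam ^ (a + b) :=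
    fun a b => (Real.rpow_add hlam a b).symm
  -- reduce each side to lam^(-2n) * original
  have L : (lam ^ (-2:ℝ) * uh - lam ^ (-2:ℝ) * u) / (lam ^ (2 * (n - 1)) * τ)
      = lam ^ ((-2:ℝ) * n) * ((uh - u) / τ) := by
    rw [show lam ^ (-2:ℝ) * uh - lam ^ (-2:ℝ) * u = lam ^ (-2:ℝ) * (uh - u) by ring,
      show ((-2:ℝ) * n) = -2 - 2 * (n - 1) by ring, Real.rpow_sub hlam]
    field_simp
  rw [L]
  have T : (1 / (lam ^ (n - σ - 1) * h))
        * (lam ^ ((-2:ℝ) * σ) * ((up + u) / 2) ^ σ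
              * (lam ^ (-2:ℝ) * up - lam ^ (-2:ℝ) * u) / (lam ^ (n - σ - 1) * h)
            - lam ^ ((-2:ℝ) * σ) * ((u + um) / 2) ^ σ
              * (lam ^ (-2:ℝ) * u - lam ^ (-2:ℝ) * um) / (lam ^ (n - σ - 1) * h))
      = lam ^ ((-2:ℝ) * n) *
        ((1 / h) * (((up + u) / 2) ^ σ * (up - u) / h
          - ((u + um) / 2) ^ σ * (u - um) / h)) := by
    have hx : lam ^ ((-2:ℝ)*σ) * lam ^ (-2:ℝ) / (lam ^ (n - σ - 1) * lam ^ (n - σ - 1))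
        = lam ^ ((-2:ℝ) * n) := by
      rw [key, key, ← Real.rpow_sub hlam]
      ring_nf
    field_simp at hx ⊢
    linear_combination (((up + u) / 2) ^ σ * (up - u) - ((u + um) / 2) ^ σ * (u - um)) * hx
  rw [T, hscheme]
  ring
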